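/- Fix K > 0 and j ∈ {1,2,3}, and let c̃, s̃ be the ultradiscrete elliptic functions. For every v ∈ ℝ, the two identities c̃(u+v) = max(s̃(u), 2c̃(u)+c̃(v)+s̃(v)) − max(c̃(u)+2c̃(v), 2s̃(u)+s̃(v)) and s̃(u+v) = max(c̃(u)+s̃(u)+2s̃(v), c̃(v)) − max(c̃(u)+2c̃(v), 2s̃(u)+s̃(v)) hold for all u ∈ [(j−1)K, jK] if and only if (v − (j−1)K) mod 3K ∈ [0, 2K]. -/

import Mathlib

/-- The ultradiscrete elliptic function `c̃`. -/
noncomputable def ctilde (K u : ℝ) : ℝ :=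
  -(9 * K / 2) * (Int.fract ((u - K) / (3 * K)) - 1 / 2) ^ 2
    + (9 * K / 2) * (Int.fract (u / (3 * K)) - 1 / 2) ^ 2

/-- The ultradiscrete elliptic function `s̃`. -/
noncomputable def stilde (K u : ℝ) : ℝ :=
  -(9 * K / 2) * (Int.fract ((u - 2 * K) / (3 * K)) - 1 / 2) ^ 2
    + (9 * K / 2) * (Int.fract (u / (3 * K)) - 1 / 2) ^ 2

/-- The real number `x` reduced modulo `y`, i.e. `x − y⌊x/y⌋`. -/
noncomputable def rmod (x y : ℝ) : ℝ := x - y * ⌊x / y⌋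


section helpers
variable {K : ℝ}

lemma fract_neg_case {t : ℝ} (h0 : -1 ≤ t) (h1 : t < 0) : Int.fract t = t + 1 := by
  have h := Int.fract_add_intCast t 1
  push_cast at h
  rw [← h]
  exact Int.fract_eq_self.mpr ⟨by linarith, by linarith⟩

lemma fract_pos_case {t : ℝ} (h0 : 0 ≤ t) (h1 : t < 1) : Int.fract t = t :=
  Int.fract_eq_self.mpr ⟨h0, h1⟩

lemma ctilde_left (hK : 0 < K) (x : ℝ) (h0 : 0 ≤ x) (h1 : x < K) :
    ctilde K x = K - 2 * x := by
  have h3K : (0:ℝ) < 3 * K := by linarith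
  have h3 : (3:ℝ) * K ≠ 0 := by positivity
  have e1 : Int.fract (x / (3 * K)) = x / (3 * K) :=
    fract_pos_case (div_nonneg (by linarith) h3K.le) (by rw [div_lt_one h3K]; linarith)
  have e2 : Int.fract ((x - K) / (3 * K)) = (x - K) / (3 * K) + 1 :=
    fract_neg_case (by rw [le_div_iff₀ h3K]; linarith)
      (div_neg_of_neg_of_pos (by linarith) h3K)
  unfold ctilde
  rw [e1, e2]
  field_simp
  try ring

lemma ctilde_right (hK : 0 < K) (x : ℝ) (h0 : K ≤ x) (h1 : x < 3 * K) :
    ctilde K x = x - 2 * K := by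
  have h3K : (0:ℝ) < 3 * K := by linarith
  have h3 : (3:ℝ) * K ≠ 0 := by positivity
  have e1 : Int.fract (x / (3 * K)) = x / (3 * K) :=
    fract_pos_case (div_nonneg (by linarith) h3K.le) (by rw [div_lt_one h3K]; linarith)
  have e2 : Int.fract ((x - K) / (3 * K)) = (x - K) / (3 * K) :=
    fract_pos_case (div_nonneg (by linarith) h3K.le) (by rw [div_lt_one h3K]; linarith)
  unfold ctilde
  rw [e1, e2]
  field_simp
  try ring

lemma stilde_left (hK : 0 < K) (x : ℝ) (h0 : 0 ≤ x) (h1 : x < 2 * K) :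
    stilde K x = K - x := by
  have h3K : (0:ℝ) < 3 * K := by linarith
  have h3 : (3:ℝ) * K ≠ 0 := by positivity
  have e1 : Int.fract (x / (3 * K)) = x / (3 * K) :=
    fract_pos_case (div_nonneg (by linarith) h3K.le) (by rw [div_lt_one h3K]; linarith)
  have e2 : Int.fract ((x - 2 * K) / (3 * K)) = (x - 2 * K) / (3 * K) + 1 :=
    fract_neg_case (by rw [le_div_iff₀ h3K]; linarith)
      (div_neg_of_neg_of_pos (by linarith) h3K)
  unfold stilde
  rw [e1, e2]
  field_simp
  try ring

lemma stilde_right (hK : 0 < K) (x : ℝ) (h0 : 2 * K ≤ x) (h1 : x < 3 * K) :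
    stilde K x = 2 * x - 5 * K := by
  have h3K : (0:ℝ) < 3 * K := by linarith
  have h3 : (3:ℝ) * K ≠ 0 := by positivity
  have e1 : Int.fract (x / (3 * K)) = x / (3 * K) :=
    fract_pos_case (div_nonneg (by linarith) h3K.le) (by rw [div_lt_one h3K]; linarith)
  have e2 : Int.fract ((x - 2 * K) / (3 * K)) = (x - 2 * K) / (3 * K) :=
    fract_pos_case (div_nonneg (by linarith) h3K.le) (by rw [div_lt_one h3K]; linarith)
  unfold stilde
  rw [e1, e2]
  field_simp
  try ring

lemma ctilde_add_int_mul (hK : K ≠ 0) (u : ℝ) (n : ℤ) :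
    ctilde K (u + 3 * K * n) = ctilde K u := by
  have h3 : (3:ℝ) * K ≠ 0 := by simp [hK]
  unfold ctilde
  rw [show (u + 3 * K * n - K) / (3 * K) = (u - K) / (3 * K) + n by field_simp; ring,
      show (u + 3 * K * n) / (3 * K) = u / (3 * K) + n by field_simp,
      Int.fract_add_intCast, Int.fract_add_intCast]

lemma stilde_add_int_mul (hK : K ≠ 0) (u : ℝ) (n : ℤ) :
    stilde K (u + 3 * K * n) = stilde K u := by
  have h3 : (3:ℝ) * K ≠ 0 := by simp [hK]
  unfold stilde
  rw [show (u + 3 * K * n - 2 * K) / (3 * K) = (u - 2 * K) / (3 * K) + n by field_simp; ring,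
      show (u + 3 * K * n) / (3 * K) = u / (3 * K) + n by field_simp,
      Int.fract_add_intCast, Int.fract_add_intCast]

lemma ctilde_period (hK : K ≠ 0) (x : ℝ) : ctilde K x = ctilde K (x - 3 * K) := by
  have h := ctilde_add_int_mul hK (x - 3 * K) 1
  push_cast at h
  rw [show x - 3 * K + 3 * K * 1 = x by ring] at h
  exact h

lemma stilde_period (hK : K ≠ 0) (x : ℝ) : stilde K x = stilde K (x - 3 * K) := by
  have h := stilde_add_int_mul hK (x - 3 * K) 1
  push_cast at h
  rw [show x - 3 * K + 3 * K * 1 = x by ring] at h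
  exact h

lemma ctilde_Icc_left (hK : 0 < K) (x : ℝ) (h0 : 0 ≤ x) (h1 : x ≤ K) :
    ctilde K x = K - 2 * x := by
  rcases lt_or_eq_of_le h1 with h | rfl
  · exact ctilde_left hK x h0 h
  · rw [ctilde_right hK x le_rfl (by linarith)]

lemma ctilde_Icc_right (hK : 0 < K) (x : ℝ) (h0 : K ≤ x) (h1 : x ≤ 3 * K) :
    ctilde K x = x - 2 * K := by
  rcases lt_or_eq_of_le h1 with h | rfl
  · exact ctilde_right hK x h0 h
  · rw [ctilde_period hK.ne' (3 * K), show 3 * K - 3 * K = (0:ℝ) by ring,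
        ctilde_left hK 0 le_rfl hK]
    ring

lemma stilde_Icc_left (hK : 0 < K) (x : ℝ) (h0 : 0 ≤ x) (h1 : x ≤ 2 * K) :
    stilde K x = K - x := by
  rcases lt_or_eq_of_le h1 with h | rfl
  · exact stilde_left hK x h0 h
  · rw [stilde_right hK (2 * K) le_rfl (by linarith)]; ring

lemma stilde_Icc_right (hK : 0 < K) (x : ℝ) (h0 : 2 * K ≤ x) (h1 : x ≤ 3 * K) :
    stilde K x = 2 * x - 5 * K := by
  rcases lt_or_eq_of_le h1 with h | rfl
  · exact stilde_right hK x h0 h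
  · rw [stilde_period hK.ne' (3 * K), show 3 * K - 3 * K = (0:ℝ) by ring,
        stilde_left hK 0 le_rfl (by linarith)]
    ring

lemma ctilde_Icc4 (hK : 0 < K) (x : ℝ) (h0 : 3 * K ≤ x) (h1 : x ≤ 4 * K) :
    ctilde K x = 7 * K - 2 * x := by
  rw [ctilde_period hK.ne' x, ctilde_Icc_left hK _ (by linarith) (by linarith)]; ring

lemma ctilde_Icc5 (hK : 0 < K) (x : ℝ) (h0 : 4 * K ≤ x) (h1 : x ≤ 6 * K) :
    ctilde K x = x - 5 * K := by
  rw [ctilde_period hK.ne' x, ctilde_Icc_right hK _ (by linarith) (by linarith)]; ring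

lemma stilde_Icc4 (hK : 0 < K) (x : ℝ) (h0 : 3 * K ≤ x) (h1 : x ≤ 5 * K) :
    stilde K x = 4 * K - x := by
  rw [stilde_period hK.ne' x, stilde_Icc_left hK _ (by linarith) (by linarith)]; ring

lemma stilde_Icc5 (hK : 0 < K) (x : ℝ) (h0 : 5 * K ≤ x) (h1 : x ≤ 6 * K) :
    stilde K x = 2 * x - 11 * K := by
  rw [stilde_period hK.ne' x, stilde_Icc_right hK _ (by linarith) (by linarith)]; ring

lemma rmod_fract {y : ℝ} (hy : y ≠ 0) (x : ℝ) : rmod x y = y * Int.fract (x / y) := by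
  unfold rmod Int.fract
  field_simp

lemma rmod_nonneg {y : ℝ} (hy : 0 < y) (x : ℝ) : 0 ≤ rmod x y := by
  rw [rmod_fract hy.ne' x]
  exact mul_nonneg hy.le (Int.fract_nonneg _)

lemma rmod_lt {y : ℝ} (hy : 0 < y) (x : ℝ) : rmod x y < y := by
  rw [rmod_fract hy.ne' x]
  nlinarith [Int.fract_lt_one (x / y), Int.fract_nonneg (x / y)]

lemma rmod_eq_self {y : ℝ} (hy : 0 < y) {x : ℝ} (h0 : 0 ≤ x) (h1 : x < y) :
    rmod x y = x := by
  rw [rmod_fract hy.ne' x, fract_pos_case (div_nonneg h0 hy.le) (by rw [div_lt_one hy]; linarith)]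
  field_simp

lemma rmod_eq_add {y : ℝ} (hy : 0 < y) {x : ℝ} (h0 : -y ≤ x) (h1 : x < 0) :
    rmod x y = x + y := by
  rw [rmod_fract hy.ne' x,
      fract_neg_case (by rw [le_div_iff₀ hy]; linarith) (div_neg_of_neg_of_pos h1 hy)]
  field_simp
  try ring

lemma rmod_add_int_mul {y : ℝ} (hy : y ≠ 0) (x : ℝ) (n : ℤ) :
    rmod (x + y * n) y = rmod x y := by
  unfold rmod
  rw [show (x + y * n) / y = x / y + n by field_simp, Int.floor_add_intCast]
  push_cast
  ring

end helpers

set_option maxHeartbeats 2000000 in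
/-- First pair of ultradiscrete addition formulae: valid on `[(j−1)K, jK]`
exactly when `v` lies in the closure of `D_j ∪ D_{j+1}` modulo `3K`. -/
theorem ultradiscrete_addition_first_pair (K : ℝ) (hK : 0 < K)
    (j : ℕ) (hj : j = 1 ∨ j = 2 ∨ j = 3) (v : ℝ) :
    (∀ u ∈ Set.Icc (((j : ℝ) - 1) * K) ((j : ℝ) * K),
      ctilde K (u + v) =
        max (stilde K u) (2 * ctilde K u + ctilde K v + stilde K v)
          - max (ctilde K u + 2 * ctilde K v) (2 * stilde K u + stilde K v) ∧
      stilde K (u + v) =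
        max (ctilde K u + stilde K u + 2 * stilde K v) (ctilde K v)
          - max (ctilde K u + 2 * ctilde K v) (2 * stilde K u + stilde K v))
    ↔ rmod (v - ((j : ℝ) - 1) * K) (3 * K) ∈ Set.Icc 0 (2 * K) := by
  have hK' : K ≠ 0 := hK.ne'
  have h3K : (0:ℝ) < 3 * K := by linarith
  obtain ⟨w, n, hv, hw0, hw3⟩ : ∃ (w : ℝ) (n : ℤ), v = w + 3 * K * n ∧ 0 ≤ w ∧ w < 3 * K := by
    refine ⟨rmod v (3 * K), ⌊v / (3 * K)⌋, ?_, rmod_nonneg h3K v, rmod_lt h3K v⟩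
    unfold rmod; ring
  have hcv : ctilde K v = ctilde K w := by rw [hv]; exact ctilde_add_int_mul hK' w n
  have hsv : stilde K v = stilde K w := by rw [hv]; exact stilde_add_int_mul hK' w n
  have hcuv : ∀ u : ℝ, ctilde K (u + v) = ctilde K (u + w) := by
    intro u
    rw [hv, show u + (w + 3 * K * (n:ℝ)) = (u + w) + 3 * K * (n:ℝ) by ring]
    exact ctilde_add_int_mul hK' (u + w) n
  have hsuv : ∀ u : ℝ, stilde K (u + v) = stilde K (u + w) := by
    intro u
    rw [hv, show u + (w + 3 * K * (n:ℝ)) = (u + w) + 3 * K * (n:ℝ) by ring]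
    exact stilde_add_int_mul hK' (u + w) n
  have hcond : rmod (v - ((j : ℝ) - 1) * K) (3 * K)
      = rmod (w - ((j : ℝ) - 1) * K) (3 * K) := by
    rw [hv, show w + 3 * K * (n:ℝ) - ((j : ℝ) - 1) * K
          = (w - ((j : ℝ) - 1) * K) + 3 * K * (n:ℝ) by ring]
    exact rmod_add_int_mul h3K.ne' _ n
  simp only [hcuv, hsuv, hcv, hsv, hcond, Set.mem_Icc]
  rcases hj with rfl | rfl | rfl
  · -- j = 1
    have c1 : ((1:ℕ):ℝ) = 1 := by norm_num
    rw [show w - (((1:ℕ):ℝ) - 1) * K = w by rw [c1]; ring,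
        rmod_eq_self h3K hw0 hw3]
    constructor
    · intro h
      refine ⟨hw0, ?_⟩
      by_contra hcon
      push_neg at hcon
      obtain ⟨h1, h2⟩ := h (K / 2) ⟨by rw [c1]; linarith, by rw [c1]; linarith⟩
      rw [ctilde_Icc_left hK (K / 2) (by linarith) (by linarith),
          stilde_Icc_left hK (K / 2) (by linarith) (by linarith),
          ctilde_Icc_right hK w (by linarith) hw3.le,
          stilde_Icc_right hK w (by linarith) hw3.le] at h1 h2
      rcases le_total (K / 2 + w) (3 * K) with hs | hs
      · rw [ctilde_Icc_right hK (K / 2 + w) (by linarith) hs] at h1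
        rw [stilde_Icc_right hK (K / 2 + w) (by linarith) hs] at h2
        simp only [max_def] at h1 h2
        split_ifs at h1 h2 <;> linarith
      · rw [ctilde_Icc4 hK (K / 2 + w) hs (by linarith)] at h1
        rw [stilde_Icc4 hK (K / 2 + w) hs (by linarith)] at h2
        simp only [max_def] at h1 h2
        split_ifs at h1 h2 <;> linarith
    · rintro ⟨-, hw2⟩ u ⟨hu1, hu2⟩
      rw [c1] at hu1 hu2
      have hu0 : 0 ≤ u := by linarith
      have hu1' : u ≤ K := by linarith
      rw [ctilde_Icc_left hK u hu0 hu1', stilde_Icc_left hK u hu0 (by linarith)]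
      rcases le_total w K with hwc | hwc
      · rw [ctilde_Icc_left hK w hw0 hwc, stilde_Icc_left hK w hw0 (by linarith),
            stilde_Icc_left hK (u + w) (by linarith) (by linarith)]
        rcases le_total (u + w) K with h | h
        · rw [ctilde_Icc_left hK (u + w) (by linarith) h]
          constructor <;> (simp only [max_def]; split_ifs <;> linarith)
        · rw [ctilde_Icc_right hK (u + w) h (by linarith)]
          constructor <;> (simp only [max_def]; split_ifs <;> linarith)
      · rw [ctilde_Icc_right hK w hwc (by linarith), stilde_Icc_left hK w hw0 hw2,
            ctilde_Icc_right hK (u + w) (by linarith) (by linarith)]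
        rcases le_total (u + w) (2 * K) with h | h
        · rw [stilde_Icc_left hK (u + w) (by linarith) h]
          constructor <;> (simp only [max_def]; split_ifs <;> linarith)
        · rw [stilde_Icc_right hK (u + w) h (by linarith)]
          constructor <;> (simp only [max_def]; split_ifs <;> linarith)
  · -- j = 2
    have c2 : ((2:ℕ):ℝ) = 2 := by norm_num
    constructor
    · intro h
      rcases le_or_gt K w with hKw | hKw
      · rw [rmod_eq_self h3K (x := w - (((2:ℕ):ℝ) - 1) * K) (by rw [c2]; linarith)
              (by rw [c2]; linarith)]
        constructor <;> (rw [c2]) <;> linarith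
      · rw [rmod_eq_add h3K (x := w - (((2:ℕ):ℝ) - 1) * K) (by rw [c2]; linarith)
              (by rw [c2]; linarith)]
        rw [c2]
        refine ⟨by linarith, ?_⟩
        by_contra hcon
        push_neg at hcon
        obtain ⟨h1, h2⟩ := h (3 * K / 2) ⟨by rw [c2]; linarith, by rw [c2]; linarith⟩
        rw [ctilde_Icc_right hK (3 * K / 2) (by linarith) (by linarith),
            stilde_Icc_left hK (3 * K / 2) (by linarith) (by linarith),
            ctilde_Icc_left hK w hw0 (by linarith),
            stilde_Icc_left hK w hw0 (by linarith)] at h1 h2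
        rw [ctilde_Icc_right hK (3 * K / 2 + w) (by linarith) (by linarith)] at h1
        rcases le_total (3 * K / 2 + w) (2 * K) with hs | hs
        · rw [stilde_Icc_left hK (3 * K / 2 + w) (by linarith) hs] at h2
          simp only [max_def] at h1 h2
          split_ifs at h1 h2 <;> linarith
        · rw [stilde_Icc_right hK (3 * K / 2 + w) hs (by linarith)] at h2
          simp only [max_def] at h1 h2
          split_ifs at h1 h2 <;> linarith
    · rintro ⟨hm1, hm2⟩ u ⟨hu1, hu2⟩
      rw [c2] at hu1 hu2
      have hu1' : K ≤ u := by linarith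
      rw [ctilde_Icc_right hK u hu1' (by linarith), stilde_Icc_left hK u (by linarith) hu2]
      rcases lt_or_ge w K with hwK | hwK
      · rw [rmod_eq_add h3K (x := w - (((2:ℕ):ℝ) - 1) * K) (by rw [c2]; linarith)
              (by rw [c2]; linarith), c2] at hm2
        have hw00 : w = 0 := by linarith
        rw [hw00, add_zero, ctilde_Icc_left hK 0 le_rfl hK.le,
            stilde_Icc_left hK 0 le_rfl (by linarith),
            ctilde_Icc_right hK u hu1' (by linarith),
            stilde_Icc_left hK u (by linarith) hu2]
        constructor <;> (simp only [max_def]; split_ifs <;> linarith)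
      · rw [ctilde_Icc_right hK w hwK hw3.le]
        rcases le_total w (2 * K) with hw2 | hw2
        · rw [stilde_Icc_left hK w hw0 hw2]
          rcases le_total (u + w) (3 * K) with hs | hs
          · rw [ctilde_Icc_right hK (u + w) (by linarith) hs,
                stilde_Icc_right hK (u + w) (by linarith) hs]
            constructor <;> (simp only [max_def]; split_ifs <;> linarith)
          · rw [ctilde_Icc4 hK (u + w) hs (by linarith),
                stilde_Icc4 hK (u + w) hs (by linarith)]
            constructor <;> (simp only [max_def]; split_ifs <;> linarith)
        · rw [stilde_Icc_right hK w hw2 hw3.le,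
              stilde_Icc4 hK (u + w) (by linarith) (by linarith)]
          rcases le_total (u + w) (4 * K) with hs | hs
          · rw [ctilde_Icc4 hK (u + w) (by linarith) hs]
            constructor <;> (simp only [max_def]; split_ifs <;> linarith)
          · rw [ctilde_Icc5 hK (u + w) hs (by linarith)]
            constructor <;> (simp only [max_def]; split_ifs <;> linarith)
  · -- j = 3
    have c3 : ((3:ℕ):ℝ) = 3 := by norm_num
    constructor
    · intro h
      rcases le_or_gt (2 * K) w with h2w | h2w
      · rw [rmod_eq_self h3K (x := w - (((3:ℕ):ℝ) - 1) * K) (by rw [c3]; linarith)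
              (by rw [c3]; linarith)]
        constructor <;> (rw [c3]) <;> linarith
      · rw [rmod_eq_add h3K (x := w - (((3:ℕ):ℝ) - 1) * K) (by rw [c3]; linarith)
              (by rw [c3]; linarith)]
        rw [c3]
        refine ⟨by linarith, ?_⟩
        by_contra hcon
        push_neg at hcon
        obtain ⟨h1, h2⟩ := h (5 * K / 2) ⟨by rw [c3]; linarith, by rw [c3]; linarith⟩
        rw [ctilde_Icc_right hK (5 * K / 2) (by linarith) (by linarith),
            stilde_Icc_right hK (5 * K / 2) (by linarith) (by linarith),
            ctilde_Icc_right hK w (by linarith) hw3.le,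
            stilde_Icc_left hK w hw0 (by linarith)] at h1 h2
        rw [stilde_Icc4 hK (5 * K / 2 + w) (by linarith) (by linarith)] at h2
        rcases le_total (5 * K / 2 + w) (4 * K) with hs | hs
        · rw [ctilde_Icc4 hK (5 * K / 2 + w) (by linarith) hs] at h1
          simp only [max_def] at h1 h2
          split_ifs at h1 h2 <;> linarith
        · rw [ctilde_Icc5 hK (5 * K / 2 + w) hs (by linarith)] at h1
          simp only [max_def] at h1 h2
          split_ifs at h1 h2 <;> linarith
    · rintro ⟨hm1, hm2⟩ u ⟨hu1, hu2⟩
      rw [c3] at hu1 hu2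
      have hu1' : 2 * K ≤ u := by linarith
      rw [ctilde_Icc_right hK u (by linarith) hu2, stilde_Icc_right hK u hu1' hu2]
      rcases le_or_gt (2 * K) w with hw2 | hw2
      · rw [ctilde_Icc_right hK w (by linarith) hw3.le,
            stilde_Icc_right hK w hw2 hw3.le,
            ctilde_Icc5 hK (u + w) (by linarith) (by linarith)]
        rcases le_total (u + w) (5 * K) with hs | hs
        · rw [stilde_Icc4 hK (u + w) (by linarith) hs]
          constructor <;> (simp only [max_def]; split_ifs <;> linarith)
        · rw [stilde_Icc5 hK (u + w) hs (by linarith)]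
          constructor <;> (simp only [max_def]; split_ifs <;> linarith)
      · have hwK : w ≤ K := by
          rw [rmod_eq_add h3K (x := w - (((3:ℕ):ℝ) - 1) * K) (by rw [c3]; linarith)
                (by rw [c3]; linarith), c3] at hm2
          linarith
        rw [ctilde_Icc_left hK w hw0 hwK, stilde_Icc_left hK w hw0 (by linarith)]
        rcases le_total (u + w) (3 * K) with hs | hs
        · rw [ctilde_Icc_right hK (u + w) (by linarith) hs,
              stilde_Icc_right hK (u + w) (by linarith) hs]
          constructor <;> (simp only [max_def]; split_ifs <;> linarith)
        · rw [ctilde_Icc4 hK (u + w) hs (by linarith),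
              stilde_Icc4 hK (u + w) hs (by linarith)]
          constructor <;> (simp only [max_def]; split_ifs <;> linarith)
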